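/- Let A = [[1,10],[0,1]] and, for k with 1 ≤ k ≤ n, let γ_k(t) = A^(k-1) · [[0,1],[-1, 5+(t-2)i]] · A^(-(k-1)) for t ∈ [0,4]. Then the isometric sphere of γ_k(t)⁻¹ has radius 1 and center 10(k-1), and the isometric sphere of γ_k(t) has radius 1 and center 5 + 10(k-1) + (t-2)i. In particular, for all choices of parameters t_k ∈ [0,4], the 2n isometric spheres of γ_1^{±1}, ..., γ_n^{±1} are pairwise disjoint. -/

import Mathlib

open Complex

/-- Euclidean center `-d/c` of the isometric sphere of a matrix `[[a,b],[c,d]]`. -/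
noncomputable def sphereCenter (M : Matrix (Fin 2) (Fin 2) ℂ) : ℂ := -(M 1 1) / M 1 0

/-- Euclidean radius `1/|c|` of the isometric sphere of a matrix `[[a,b],[c,d]]`. -/
noncomputable def sphereRadius (M : Matrix (Fin 2) (Fin 2) ℂ) : ℝ := 1 / ‖M 1 0‖

/-- The parabolic matrix `A = [[1,10],[0,1]]`. -/
noncomputable def Amat : Matrix (Fin 2) (Fin 2) ℂ := !![1, 10; 0, 1]

/-- `γ_k(t) = A^(k-1) [[0,1],[-1,5+(t-2)i]] A^(-(k-1))`, indexed here by `k : Fin n`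
(so `k` plays the role of `k-1 ∈ {0, …, n-1}`). -/
noncomputable def γmat {n : ℕ} (k : Fin n) (t : ℝ) : Matrix (Fin 2) (Fin 2) ℂ :=
  Amat ^ (k : ℕ) * !![0, 1; -1, 5 + (t - 2) * Complex.I] * (Amat ^ (k : ℕ))⁻¹

/-- Center and radius of the isometric sphere of `γ_k(t_k)^ε`, where `ε = +1` when the
boolean is `true` and `ε = -1` when it is `false`. -/
noncomputable def sph {n : ℕ} (t : Fin n → ℝ) (p : Fin n × Bool) : ℂ × ℝ :=
  if p.2 then (sphereCenter (γmat p.1 (t p.1)), sphereRadius (γmat p.1 (t p.1)))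
  else (sphereCenter ((γmat p.1 (t p.1))⁻¹), sphereRadius ((γmat p.1 (t p.1))⁻¹))


lemma Apow (k : ℕ) : Amat ^ k = !![1, 10*(k:ℂ); 0, 1] := by
  induction k with
  | zero => ext i j; fin_cases i <;> fin_cases j <;> simp
  | succ k ih =>
      rw [pow_succ, ih]
      ext i j; fin_cases i <;> fin_cases j <;>
        simp [Amat, Matrix.mul_apply, Fin.sum_univ_two] <;> ring

lemma Apow_inv (k : ℕ) : (Amat ^ k)⁻¹ = !![1, -(10*(k:ℂ)); 0, 1] := by
  apply Matrix.inv_eq_right_inv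
  rw [Apow]
  ext i j; fin_cases i <;> fin_cases j <;>
    simp [Matrix.mul_apply, Fin.sum_univ_two]

lemma γmat_eq {n : ℕ} (k : Fin n) (t : ℝ) :
    γmat k t = !![-(10*(k:ℂ)), 1 + 10*(k:ℂ)*(5 + (t - 2)*Complex.I) + 100*(k:ℂ)^2;
                  -1, (5 + (t - 2)*Complex.I) + 10*(k:ℂ)] := by
  rw [γmat, Apow_inv, Apow]
  ext i j; fin_cases i <;> fin_cases j <;>
    simp [Matrix.mul_apply, Fin.sum_univ_two] <;> ring

lemma γmat_inv_eq {n : ℕ} (k : Fin n) (t : ℝ) :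
    (γmat k t)⁻¹ = !![(5 + (t - 2)*Complex.I) + 10*(k:ℂ),
                      -(1 + 10*(k:ℂ)*(5 + (t - 2)*Complex.I) + 100*(k:ℂ)^2);
                      1, -(10*(k:ℂ))] := by
  apply Matrix.inv_eq_right_inv
  rw [γmat_eq]
  ext i j; fin_cases i <;> fin_cases j <;>
    simp [Matrix.mul_apply, Fin.sum_univ_two] <;> ring

lemma rad_γ {n : ℕ} (k : Fin n) (t : ℝ) : sphereRadius (γmat k t) = 1 := by
  rw [sphereRadius, γmat_eq]; simp

lemma rad_γinv {n : ℕ} (k : Fin n) (t : ℝ) : sphereRadius ((γmat k t)⁻¹) = 1 := by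
  rw [sphereRadius, γmat_inv_eq]; simp

lemma cen_γ {n : ℕ} (k : Fin n) (t : ℝ) :
    sphereCenter (γmat k t) = 5 + 10 * ((k:ℕ):ℂ) + ((t:ℂ) - 2) * Complex.I := by
  rw [sphereCenter, γmat_eq]; simp; ring

lemma cen_γinv {n : ℕ} (k : Fin n) (t : ℝ) :
    sphereCenter ((γmat k t)⁻¹) = 10 * ((k:ℕ):ℂ) := by
  rw [sphereCenter, γmat_inv_eq]; simp

lemma nat_dist (k j : ℕ) (h : k ≠ j) : (1:ℝ) ≤ |(k:ℝ) - j| := by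
  have h0 : ((k:ℤ) - j) ≠ 0 := sub_ne_zero.mpr (by exact_mod_cast h)
  have h1 := Int.one_le_abs h0
  have h2 : (1:ℝ) ≤ |((k:ℤ) - j : ℤ)| := by exact_mod_cast h1
  push_cast at h2; exact h2

lemma hmix (k j : ℕ) : (5:ℝ) ≤ |5 + 10*(k:ℝ) - 10*j| := by
  rcases le_or_gt (j:ℕ) k with h | h
  · have hjk : (j:ℝ) ≤ k := by exact_mod_cast h
    have h5 : (0:ℝ) ≤ 5 + 10*(k:ℝ) - 10*j := by linarith
    rw [_root_.abs_of_nonneg h5]; linarith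
  · have hjk : (k:ℝ) + 1 ≤ j := by exact_mod_cast h
    have h5 : 5 + 10*(k:ℝ) - 10*j ≤ 0 := by linarith
    rw [_root_.abs_of_nonpos h5]; linarith

lemma key (z : ℂ) (h : 5 ≤ |z.re|) : ‖z‖ > 1 + 1 :=
  lt_of_lt_of_le (by linarith) (le_trans h (Complex.abs_re_le_norm z))

/-- The isometric sphere of `γ_k(t)⁻¹` has radius 1 and center `10(k-1)`, that of
`γ_k(t)` has radius 1 and center `5 + 10(k-1) + (t-2)i`, and for all parameters
`t_k ∈ [0,4]` the `2n` isometric spheres of `γ_1^{±1}, …, γ_n^{±1}` are pairwise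
disjoint. -/
theorem gamma_family_spheres_disjoint (n : ℕ) (t : Fin n → ℝ)
    (ht : ∀ k, t k ∈ Set.Icc (0 : ℝ) 4) :
    (∀ k : Fin n,
      sphereRadius ((γmat k (t k))⁻¹) = 1 ∧
      sphereCenter ((γmat k (t k))⁻¹) = 10 * (k : ℕ) ∧
      sphereRadius (γmat k (t k)) = 1 ∧
      sphereCenter (γmat k (t k)) = 5 + 10 * (k : ℕ) + (t k - 2) * Complex.I) ∧
    (∀ p q : Fin n × Bool, p ≠ q →
      ‖(sph t p).1 - (sph t q).1‖ > (sph t p).2 + (sph t q).2) := by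
  constructor
  · intro k
    exact ⟨rad_γinv k (t k), cen_γinv k (t k), rad_γ k (t k), cen_γ k (t k)⟩
  rintro ⟨k, bk⟩ ⟨j, bj⟩ hne
  cases bk <;> cases bj <;>
    simp only [sph, if_true, if_false, Bool.false_eq_true, cen_γ, cen_γinv, rad_γ, rad_γinv]
  · have hkj : (k:ℕ) ≠ j := by
      intro h; exact hne (by simp [Prod.ext_iff, Fin.ext_iff, h])
    apply key
    have hre : ((10 * ((k:ℕ):ℂ)) - 10 * ((j:ℕ):ℂ)).re = 10*((k:ℕ):ℝ) - 10*(j:ℕ) := by simp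
    rw [hre]
    have := nat_dist k j hkj
    rcases abs_cases (((k:ℕ):ℝ) - (j:ℕ)) with ⟨h1,h2⟩|⟨h1,h2⟩ <;>
      rcases abs_cases (10*((k:ℕ):ℝ) - 10*((j:ℕ):ℝ)) with ⟨h3,h4⟩|⟨h3,h4⟩ <;> linarith
  · apply key
    have hre : ((10*((k:ℕ):ℂ)) - (5 + 10*((j:ℕ):ℂ) + (((t j):ℂ)-2)*Complex.I)).re
        = -(5 + 10*((j:ℕ):ℝ) - 10*((k:ℕ):ℝ)) := by simp
    rw [hre, abs_neg]; exact hmix j k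
  · apply key
    have hre : ((5 + 10*((k:ℕ):ℂ) + (((t k):ℂ)-2)*Complex.I) - 10*((j:ℕ):ℂ)).re
        = 5 + 10*((k:ℕ):ℝ) - 10*((j:ℕ):ℝ) := by simp
    rw [hre]; exact hmix k j
  · have hkj : (k:ℕ) ≠ j := by
      intro h; exact hne (by simp [Prod.ext_iff, Fin.ext_iff, h])
    apply key
    have hre : ((5 + 10*((k:ℕ):ℂ) + (((t k):ℂ)-2)*Complex.I)
        - (5 + 10*((j:ℕ):ℂ) + (((t j):ℂ)-2)*Complex.I)).re
        = 10*((k:ℕ):ℝ) - 10*((j:ℕ):ℝ) := by simp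
    rw [hre]
    have := nat_dist k j hkj
    rcases abs_cases (((k:ℕ):ℝ) - (j:ℕ)) with ⟨h1,h2⟩|⟨h1,h2⟩ <;>
      rcases abs_cases (10*((k:ℕ):ℝ) - 10*((j:ℕ):ℝ)) with ⟨h3,h4⟩|⟨h3,h4⟩ <;> linarith
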